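/- arXiv:1112.4892 — 5 statements merged into one kernel-verified Lean document; each statement's English description precedes it below -/
import Mathlib

section
/- Let φ: ℝ → ℝ be continuous and 2π-periodic, and let N ≥ 1 be an integer. Suppose that for every integer λ with 0 ≤ λ ≤ N^N the function e^{iλφ} has absolutely convergent Fourier series, and set Θ = max_{0 ≤ λ ≤ N^N} ‖e^{iλφ}‖_{A(𝕋)}. Let Q and P₀, …, P_{N−1} be integers with 1 ≤ Q ≤ N^N and |(1/(2π))φ(2πj/N)·Q − P_j| ≤ 1/N for j = 0, …, N−1, and define ψ: ℤ/Nℤ → ℝ by ψ(j) = 2πP_j/Q. Then for every integer n with 0 ≤ n ≤ Q−1 one has ‖e^{inψ}‖_{A(𝕋_N)} ≤ 8Θ. -/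
open scoped Real
open Complex MeasureTheory Filter

/-- The `k`-th Fourier coefficient of a `2π`-periodic function `f : ℝ → ℂ`. -/
noncomputable def fourierCoeffT (f : ℝ → ℂ) (k : ℤ) : ℂ :=
  (1 / (2 * (π : ℂ))) * ∫ t in (0 : ℝ)..(2 * π), f t * Complex.exp (-Complex.I * (k : ℂ) * (t : ℂ))

/-- The `A(𝕋)` norm: the sum of absolute values of the Fourier coefficients. -/
noncomputable def normAT (f : ℝ → ℂ) : ℝ :=
  ∑' k : ℤ, ‖fourierCoeffT f k‖

/-- The Fourier transform on the cyclic group `ℤ/Nℤ`. -/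
noncomputable def dftN (N : ℕ) [NeZero N] (g : ZMod N → ℂ) (k : ZMod N) : ℂ :=
  (1 / (N : ℂ)) * ∑ j : ZMod N,
    g j * Complex.exp (-(2 * (π : ℂ) * Complex.I) * (j.val : ℂ) * (k.val : ℂ) / (N : ℂ))

/-- The `A(𝕋_N)` norm on the cyclic group `ℤ/Nℤ`. -/
noncomputable def normAN (N : ℕ) [NeZero N] (g : ZMod N → ℂ) : ℝ :=
  ∑ k : ZMod N, ‖dftN N g k‖

/-! ### Auxiliary lemmas -/

/-- `|e^{ix} - e^{iy}| ≤ |x - y|` for real `x, y`. -/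
lemma norm_exp_mul_I_sub_exp_mul_I_le (a b : ℝ) :
    ‖Complex.exp (Complex.I * a) - Complex.exp (Complex.I * b)‖ ≤ |a - b| := by
  have h1 : Complex.exp (Complex.I * a) - Complex.exp (Complex.I * b)
      = Complex.exp (Complex.I * b) * (Complex.exp (((a - b : ℝ) : ℂ) * Complex.I) - 1) := by
    rw [mul_sub, ← Complex.exp_add, mul_one]
    push_cast
    ring_nf
  rw [h1, norm_mul]
  have h2 : ‖Complex.exp (Complex.I * (b:ℂ))‖ = 1 := by
    rw [mul_comm]; exact Complex.norm_exp_ofReal_mul_I b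
  rw [h2, one_mul]
  set θ := a - b with hθ
  clear_value θ
  have h3 : Complex.exp ((θ:ℂ) * Complex.I) - 1 = Complex.mk (Real.cos θ - 1) (Real.sin θ) := by
    rw [Complex.exp_mul_I]
    apply Complex.ext <;> simp [Complex.cos_ofReal_re, Complex.sin_ofReal_re]
  rw [h3]
  have h4 : ‖Complex.mk (Real.cos θ - 1) (Real.sin θ)‖
      = Real.sqrt ((Real.cos θ - 1)^2 + (Real.sin θ)^2) := by
    rw [Complex.norm_def, Complex.normSq_mk]; ring_nf
  rw [h4]
  have h5 : (Real.cos θ - 1)^2 + (Real.sin θ)^2 ≤ θ^2 := by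
    have hs : Real.sin (θ/2) ^ 2 = 1/2 - Real.cos θ / 2 := by
      have := Real.sin_sq_eq_half_sub (θ/2)
      rwa [show 2 * (θ/2) = θ by ring] at this
    have hb : |Real.sin (θ/2)| ≤ |θ/2| := Real.abs_sin_le_abs
    have hb2 : Real.sin (θ/2)^2 ≤ (θ/2)^2 := by
      rw [← _root_.sq_abs, ← _root_.sq_abs (θ/2)]
      exact pow_le_pow_left₀ (abs_nonneg _) hb 2
    have hpy := Real.sin_sq_add_cos_sq θ
    have e1 : (Real.cos θ - 1)^2 + (Real.sin θ)^2 = 4 * Real.sin (θ/2)^2 := by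
      linear_combination hpy - 4*hs
    have e2 : 4*(θ/2)^2 = θ^2 := by ring
    nlinarith [hb2, e1, e2]
  calc Real.sqrt ((Real.cos θ - 1)^2 + (Real.sin θ)^2) ≤ Real.sqrt (θ^2) :=
        Real.sqrt_le_sqrt h5
    _ = |θ| := Real.sqrt_sq_eq_abs θ

/-- Orthogonality of characters on `ℤ/Nℤ`. -/
lemma ortho (N : ℕ) [NeZero N] (m : ℤ) (k : ZMod N) :
    (1/(N:ℂ)) * ∑ j : ZMod N,
      Complex.exp (Complex.I * (m:ℂ) * ((2*π*(j.val:ℝ)/(N:ℝ) : ℝ) : ℂ)) *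
      Complex.exp (-(2*(π:ℂ)*Complex.I) * (j.val:ℂ) * (k.val:ℂ) / (N:ℂ))
    = if (m : ZMod N) = k then 1 else 0 := by
  have hN : (N:ℂ) ≠ 0 := Nat.cast_ne_zero.mpr (NeZero.ne N)
  set ω : ℂ := Complex.exp (2*π*Complex.I*((m:ℂ) - (k.val:ℂ))/(N:ℂ)) with hω
  have hterm : ∀ j : ZMod N,
      Complex.exp (Complex.I * (m:ℂ) * ((2*π*(j.val:ℝ)/(N:ℝ) : ℝ) : ℂ)) *
      Complex.exp (-(2*(π:ℂ)*Complex.I) * (j.val:ℂ) * (k.val:ℂ) / (N:ℂ)) = ω ^ (j.val) := by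
    intro j
    rw [hω, ← Complex.exp_nat_mul, ← Complex.exp_add]
    congr 1
    push_cast
    field_simp
    ring
  rw [Finset.sum_congr rfl (fun j _ => hterm j)]
  have hsum : ∑ j : ZMod N, ω ^ (j.val) = ∑ i ∈ Finset.range N, ω ^ i := by
    apply Finset.sum_nbij' (fun j : ZMod N => j.val) (fun i : ℕ => (i : ZMod N))
    · intro j _; exact Finset.mem_range.mpr (ZMod.val_lt j)
    · intro i _; exact Finset.mem_univ _
    · intro j _; exact ZMod.natCast_rightInverse j
    · intro i hi; exact ZMod.val_cast_of_lt (Finset.mem_range.mp hi)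
    · intro j _; rfl
  rw [hsum]
  have hωN : ω ^ N = 1 := by
    rw [hω, ← Complex.exp_nat_mul]
    have : (N:ℂ) * (2*π*Complex.I*((m:ℂ) - (k.val:ℂ))/(N:ℂ))
        = ((m - (k.val:ℤ)) : ℤ) * (2*π*Complex.I) := by
      push_cast; field_simp
    rw [this, Complex.exp_int_mul_two_pi_mul_I]
  by_cases hc : (m : ZMod N) = k
  · have hdvd : (N:ℤ) ∣ (m - (k.val:ℤ)) := by
      rw [← ZMod.intCast_zmod_eq_zero_iff_dvd, Int.cast_sub, Int.cast_natCast,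
        ZMod.natCast_zmod_val, hc, sub_self]
    obtain ⟨d, hd⟩ := hdvd
    have hω1 : ω = 1 := by
      rw [hω]
      have : 2*(π:ℂ)*Complex.I*((m:ℂ) - (k.val:ℂ))/(N:ℂ) = (d:ℤ) * (2*π*Complex.I) := by
        have hmk : (m:ℂ) - (k.val:ℂ) = (N:ℂ) * (d:ℂ) := by
          exact_mod_cast congrArg (fun x : ℤ => (x:ℂ)) hd
        rw [hmk]; field_simp
      rw [this, Complex.exp_int_mul_two_pi_mul_I]
    rw [if_pos hc, hω1]
    simp [hN]
  · have hω1 : ω ≠ 1 := by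
      intro h1
      rw [hω, Complex.exp_eq_one_iff] at h1
      obtain ⟨d, hd⟩ := h1
      have hπ : (π:ℂ) ≠ 0 := by exact_mod_cast Real.pi_ne_zero
      have h2 : (2*(π:ℂ)*Complex.I) ≠ 0 := by simp [hπ, Complex.I_ne_zero]
      have hmk : (m:ℂ) - (k.val:ℂ) = (d:ℂ) * (N:ℂ) := by
        field_simp at hd
        apply mul_left_cancel₀ h2
        linear_combination (2*(π:ℂ)*Complex.I) * hd
      have hmk' : m - (k.val:ℤ) = d * N := by exact_mod_cast hmk
      apply hc
      have : m = (k.val:ℤ) + d * N := by linarith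
      rw [this]
      push_cast
      simp [ZMod.natCast_zmod_val, ZMod.natCast_self]
    rw [if_neg hc, geom_sum_eq hω1, hωN, sub_self, zero_div, mul_zero]

lemma exp_arg_simp (k : ℤ) (t : ℝ) :
    2 * (π:ℂ) * Complex.I * ((k:ℂ)) * (t:ℂ) / ((2*π : ℝ):ℂ) = Complex.I * (k:ℂ) * (t:ℂ) := by
  have hπ : (π:ℂ) ≠ 0 := by exact_mod_cast Real.pi_ne_zero
  push_cast
  field_simp

/-- Pointwise convergence of the Fourier series for a continuous periodic function with
absolutely convergent Fourier coefficients. -/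
lemma pointwise_sum (f : ℝ → ℂ) (hfc : Continuous f) (hfp : Function.Periodic f (2 * π))
    (hfs : Summable fun k : ℤ => ‖fourierCoeffT f k‖) (x : ℝ) :
    HasSum (fun k : ℤ => fourierCoeffT f k * Complex.exp (Complex.I * (k:ℂ) * (x:ℂ))) (f x) := by
  haveI : Fact (0 < 2 * π) := ⟨by positivity⟩
  set F : C(AddCircle (2 * π), ℂ) := ⟨hfp.lift, continuous_coinduced_dom.mpr hfc⟩ with hF
  have hcoeff : ∀ k : ℤ, fourierCoeff (F : AddCircle (2*π) → ℂ) k = fourierCoeffT f k := by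
    intro k
    rw [fourierCoeff_eq_intervalIntegral _ k 0, zero_add, Complex.real_smul, fourierCoeffT]
    congr 1
    · push_cast; ring
    · apply intervalIntegral.integral_congr
      intro t _
      have h1 : (F : AddCircle (2*π) → ℂ) (t : AddCircle (2*π)) = f t := hfp.lift_coe t
      have h2 : (fourier (-k) (t : AddCircle (2*π)) : ℂ)
          = Complex.exp (-Complex.I * (k:ℂ) * (t:ℂ)) := by
        rw [fourier_coe_apply]
        congr 1
        have hπ : (π:ℂ) ≠ 0 := by exact_mod_cast Real.pi_ne_zero
        push_cast
        field_simp
      show (fourier (-k)) (t : AddCircle (2*π)) • F (t : AddCircle (2*π))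
          = f t * Complex.exp (-Complex.I * (k:ℂ) * (t:ℂ))
      rw [smul_eq_mul, h1, h2]; ring
  have hsummable : Summable (fourierCoeff (F : AddCircle (2*π) → ℂ)) := by
    apply Summable.of_norm
    apply hfs.congr
    intro k; rw [hcoeff]
  have hps := has_pointwise_sum_fourier_series_of_summable (f := F) hsummable
    (x : AddCircle (2*π))
  have hFx : F (x : AddCircle (2*π)) = f x := hfp.lift_coe x
  rw [hFx] at hps
  have heq : (fun k : ℤ => fourierCoeffT f k * Complex.exp (Complex.I * (k:ℂ) * (x:ℂ)))
      = (fun k : ℤ => fourierCoeff (F : AddCircle (2*π) → ℂ) k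
          • fourier k (x : AddCircle (2*π))) := by
    funext k
    rw [hcoeff, smul_eq_mul, fourier_coe_apply]
    congr 1
    rw [show ((2*π:ℝ):ℂ) = 2*(π:ℂ) from by push_cast; ring, ← exp_arg_simp k x]
    push_cast
    ring_nf
  rw [heq]
  exact hps

set_option maxHeartbeats 1000000 in
/-- The sampling inequality: `‖f sampled on N points‖_{A(𝕋_N)} ≤ ‖f‖_{A(𝕋)}`. -/
lemma sampling (N : ℕ) [NeZero N] (f : ℝ → ℂ) (hfc : Continuous f)
    (hfp : Function.Periodic f (2 * π))
    (hfs : Summable fun k : ℤ => ‖fourierCoeffT f k‖) :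
    normAN N (fun j : ZMod N => f (2 * π * (j.val : ℝ) / N)) ≤ normAT f := by
  set c : ℤ → ℂ := fourierCoeffT f with hcdef
  set g : ZMod N → ℂ := fun j : ZMod N => f (2 * π * (j.val : ℝ) / N) with hgdef
  have hpt : ∀ x : ℝ, HasSum (fun m : ℤ => c m * Complex.exp (Complex.I * (m:ℂ) * (x:ℂ))) (f x) :=
    fun x => pointwise_sum f hfc hfp hfs x
  have hgval : ∀ j : ZMod N, g j = f (2 * π * (j.val : ℝ) / N) := fun j => rfl
  have hfs' : Summable fun m : ℤ => ‖c m‖ := hfs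
  clear_value c g
  have key : ∀ k : ZMod N,
      HasSum (fun m : ℤ => if (m : ZMod N) = k then c m else 0) (dftN N g k) := by
    intro k
    have h1 : ∀ j : ZMod N,
        HasSum (fun m : ℤ => c m * Complex.exp (Complex.I * (m:ℂ) * ((2*π*(j.val:ℝ)/(N:ℝ) : ℝ) : ℂ))
          * Complex.exp (-(2*(π:ℂ)*Complex.I) * (j.val:ℂ) * (k.val:ℂ) / (N:ℂ)))
        (g j * Complex.exp (-(2*(π:ℂ)*Complex.I) * (j.val:ℂ) * (k.val:ℂ) / (N:ℂ))) := by
      intro j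
      rw [hgval j]
      exact (hpt _).mul_right _
    have h2 := hasSum_sum (s := (Finset.univ : Finset (ZMod N))) (fun j _ => h1 j)
    have h3 := h2.mul_left (1/(N:ℂ))
    have heq : (fun m : ℤ => if (m : ZMod N) = k then c m else 0)
        = fun m : ℤ => (1/(N:ℂ)) * ∑ j : ZMod N, (c m *
          Complex.exp (Complex.I * (m:ℂ) * ((2*π*(j.val:ℝ)/(N:ℝ) : ℝ) : ℂ))
          * Complex.exp (-(2*(π:ℂ)*Complex.I) * (j.val:ℂ) * (k.val:ℂ) / (N:ℂ))) := by
      funext m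
      have e1 : ∑ j : ZMod N, (c m *
          Complex.exp (Complex.I * (m:ℂ) * ((2*π*(j.val:ℝ)/(N:ℝ) : ℝ) : ℂ))
          * Complex.exp (-(2*(π:ℂ)*Complex.I) * (j.val:ℂ) * (k.val:ℂ) / (N:ℂ)))
          = c m * ∑ j : ZMod N, (Complex.exp (Complex.I * (m:ℂ) * ((2*π*(j.val:ℝ)/(N:ℝ) : ℝ) : ℂ))
          * Complex.exp (-(2*(π:ℂ)*Complex.I) * (j.val:ℂ) * (k.val:ℂ) / (N:ℂ))) := by
        rw [Finset.mul_sum]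
        exact Finset.sum_congr rfl (fun j _ => by ring)
      rw [e1, mul_left_comm, ortho N m k]
      by_cases hm : (m : ZMod N) = k <;> simp [hm]
    rw [heq]
    exact h3
  have hsummable : ∀ k : ZMod N,
      Summable (fun m : ℤ => ‖if (m : ZMod N) = k then c m else 0‖) := by
    intro k
    apply Summable.of_nonneg_of_le (fun m => norm_nonneg _) _ hfs'
    intro m
    by_cases hm : (m : ZMod N) = k <;> simp [hm]
  have step1 : ∀ k : ZMod N, ‖dftN N g k‖ ≤ ∑' m : ℤ, ‖if (m : ZMod N) = k then c m else 0‖ := by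
    intro k
    rw [← (key k).tsum_eq]
    exact norm_tsum_le_tsum_norm (hsummable k)
  calc normAN N g = ∑ k : ZMod N, ‖dftN N g k‖ := rfl
    _ ≤ ∑ k : ZMod N, ∑' m : ℤ, ‖if (m : ZMod N) = k then c m else 0‖ :=
        Finset.sum_le_sum (fun k _ => step1 k)
    _ = ∑' m : ℤ, ∑ k : ZMod N, ‖if (m : ZMod N) = k then c m else 0‖ :=
        (Summable.tsum_finsetSum (fun k _ => hsummable k)).symm
    _ = ∑' m : ℤ, ‖c m‖ := by
        congr 1
        funext m
        rw [show (fun k : ZMod N => ‖if (m : ZMod N) = k then c m else 0‖)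
            = fun k : ZMod N => if (m : ZMod N) = k then ‖c m‖ else 0 from by
          funext k; by_cases hm : (m : ZMod N) = k <;> simp [hm]]
        rw [Finset.sum_ite_eq]
        simp
    _ = normAT f := by rw [normAT, hcdef]

lemma norm_E_eq_one (N : ℕ) [NeZero N] (j k : ZMod N) :
    ‖Complex.exp (-(2 * (π : ℂ) * Complex.I) * (j.val : ℂ) * (k.val : ℂ) / (N : ℂ))‖ = 1 := by
  rw [show -(2 * (π : ℂ) * Complex.I) * (j.val : ℂ) * (k.val : ℂ) / (N : ℂ)
      = ((-(2 * π * (j.val:ℝ) * (k.val:ℝ) / N) : ℝ) : ℂ) * Complex.I from by push_cast; ring]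
  exact Complex.norm_exp_ofReal_mul_I _

/-- Crude bound: `‖g‖_{A(𝕋_N)} ≤ ∑_j ‖g j‖`. -/
lemma crude (N : ℕ) [NeZero N] (h : ZMod N → ℂ) :
    normAN N h ≤ ∑ j : ZMod N, ‖h j‖ := by
  have hN : (0:ℝ) < (N:ℝ) := by exact_mod_cast Nat.pos_of_ne_zero (NeZero.ne N)
  have hb : ∀ k : ZMod N, ‖dftN N h k‖ ≤ (1/(N:ℝ)) * ∑ j : ZMod N, ‖h j‖ := by
    intro k
    rw [dftN, norm_mul]
    have h1 : ‖(1/(N:ℂ))‖ = 1/(N:ℝ) := by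
      simp [Complex.norm_natCast]
    rw [h1]
    apply mul_le_mul_of_nonneg_left _ (by positivity)
    calc ‖∑ j : ZMod N, h j * Complex.exp (-(2 * (π : ℂ) * Complex.I) * (j.val : ℂ)
            * (k.val : ℂ) / (N : ℂ))‖
        ≤ ∑ j : ZMod N, ‖h j * Complex.exp (-(2 * (π : ℂ) * Complex.I) * (j.val : ℂ)
            * (k.val : ℂ) / (N : ℂ))‖ := norm_sum_le _ _
      _ = ∑ j : ZMod N, ‖h j‖ := by
          apply Finset.sum_congr rfl
          intro j _
          rw [norm_mul, norm_E_eq_one, mul_one]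
  calc normAN N h ≤ ∑ _k : ZMod N, (1/(N:ℝ)) * ∑ j : ZMod N, ‖h j‖ :=
        Finset.sum_le_sum (fun k _ => hb k)
    _ = (N:ℝ) * ((1/(N:ℝ)) * ∑ j : ZMod N, ‖h j‖) := by
        rw [Finset.sum_const, Finset.card_univ, ZMod.card, nsmul_eq_mul]
    _ = ∑ j : ZMod N, ‖h j‖ := by field_simp

/-- Triangle inequality for `normAN`. -/
lemma tri (N : ℕ) [NeZero N] (a b : ZMod N → ℂ) :
    normAN N a ≤ normAN N b + ∑ j : ZMod N, ‖a j - b j‖ := by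
  have hdft : ∀ k : ZMod N, dftN N a k = dftN N b k + dftN N (fun j => a j - b j) k := by
    intro k
    rw [dftN, dftN, dftN, ← mul_add, ← Finset.sum_add_distrib]
    congr 1
    apply Finset.sum_congr rfl
    intro j _
    ring
  calc normAN N a = ∑ k : ZMod N, ‖dftN N b k + dftN N (fun j => a j - b j) k‖ := by
        rw [normAN]; exact Finset.sum_congr rfl (fun k _ => by rw [hdft k])
    _ ≤ ∑ k : ZMod N, (‖dftN N b k‖ + ‖dftN N (fun j => a j - b j) k‖) :=
        Finset.sum_le_sum (fun k _ => norm_add_le _ _)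
    _ = normAN N b + normAN N (fun j => a j - b j) := by
        rw [Finset.sum_add_distrib]; rfl
    _ ≤ normAN N b + ∑ j : ZMod N, ‖a j - b j‖ := by
        have := crude N (fun j => a j - b j)
        linarith

lemma coeff_one_zero : fourierCoeffT (fun _ : ℝ => (1:ℂ)) 0 = 1 := by
  have hπ : (π:ℂ) ≠ 0 := by exact_mod_cast Real.pi_ne_zero
  rw [fourierCoeffT]
  simp only [Int.cast_zero, mul_zero, zero_mul, neg_zero, Complex.exp_zero, one_mul, mul_one]
  rw [intervalIntegral.integral_const]
  simp [Complex.real_smul]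
  field_simp

set_option maxHeartbeats 2000000 in
theorem diophantine_discretization_bound
    (φ : ℝ → ℝ) (hcont : Continuous φ) (hper : Function.Periodic φ (2 * π))
    (N : ℕ) [NeZero N]
    (hsum : ∀ l : ℕ, l ≤ N ^ N →
      Summable fun k : ℤ =>
        ‖fourierCoeffT (fun t : ℝ => Complex.exp (Complex.I * (l : ℂ) * (φ t : ℂ))) k‖)
    (Θ : ℝ)
    (hΘ : Θ = (Finset.range (N ^ N + 1)).sup' ⟨0, Finset.mem_range.2 (Nat.succ_pos _)⟩
      (fun l : ℕ => normAT fun t : ℝ => Complex.exp (Complex.I * (l : ℂ) * (φ t : ℂ))))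
    (Q : ℤ) (hQ₁ : 1 ≤ Q) (hQ₂ : Q ≤ (N : ℤ) ^ N)
    (P : ZMod N → ℤ)
    (hP : ∀ j : ZMod N,
      |(1 / (2 * π)) * φ (2 * π * j.val / N) * (Q : ℝ) - (P j : ℝ)| ≤ 1 / N)
    (ψ : ZMod N → ℝ) (hψ : ∀ j : ZMod N, ψ j = 2 * π * (P j : ℝ) / (Q : ℝ)) :
    ∀ n : ℤ, 0 ≤ n → n ≤ Q - 1 →
      normAN N (fun j : ZMod N => Complex.exp (Complex.I * (n : ℂ) * (ψ j : ℂ))) ≤ 8 * Θ := by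
  intro n hn0 hn1
  have hNpos : (0:ℝ) < (N:ℝ) := by exact_mod_cast Nat.pos_of_ne_zero (NeZero.ne N)
  have hπpos : (0:ℝ) < π := Real.pi_pos
  -- Θ ≥ 1
  have hΘ1 : (1:ℝ) ≤ Θ := by
    have h0 : (fun t : ℝ => Complex.exp (Complex.I * ((0:ℕ) : ℂ) * (φ t : ℂ)))
        = fun _ : ℝ => (1:ℂ) := by
      funext t; simp
    have hs0 := hsum 0 (Nat.zero_le _)
    rw [h0] at hs0
    have h1 : (1:ℝ) ≤ normAT (fun _ : ℝ => (1:ℂ)) := by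
      have hle := Summable.le_tsum hs0 0 (fun j _ => norm_nonneg _)
      rw [coeff_one_zero] at hle
      simpa [normAT] using hle
    have h2 : normAT (fun _ : ℝ => (1:ℂ)) ≤ Θ := by
      rw [hΘ]
      have := Finset.le_sup' (f := fun l : ℕ => normAT fun t : ℝ =>
        Complex.exp (Complex.I * (l : ℂ) * (φ t : ℂ)))
        (Finset.mem_range.mpr (Nat.succ_pos (N ^ N)) : 0 ∈ Finset.range (N ^ N + 1))
      rw [h0] at this
      exact this
    linarith
  -- set up l = n.toNat and the function f
  set l : ℕ := n.toNat with hldef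
  have hl : (l:ℤ) = n := Int.toNat_of_nonneg hn0
  have hlN : l ≤ N ^ N := by
    have h1 : (l:ℤ) ≤ (N:ℤ) ^ N := by rw [hl]; linarith
    exact_mod_cast h1
  set f : ℝ → ℂ := fun t : ℝ => Complex.exp (Complex.I * (l : ℂ) * (φ t : ℂ)) with hfdef
  have hfc : Continuous f :=
    Complex.continuous_exp.comp (continuous_const.mul (Complex.continuous_ofReal.comp hcont))
  have hfp : Function.Periodic f (2 * π) := by
    intro t
    simp only [hfdef]
    rw [hper t]
  have hfs : Summable fun k : ℤ => ‖fourierCoeffT f k‖ := hsum l hlN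
  have hΘf : normAT f ≤ Θ := by
    rw [hΘ]
    exact Finset.le_sup' (f := fun l : ℕ => normAT fun t : ℝ =>
      Complex.exp (Complex.I * (l : ℂ) * (φ t : ℂ)))
      (Finset.mem_range.mpr (Nat.lt_succ_of_le hlN))
  -- triangle inequality
  set a : ZMod N → ℂ := fun j : ZMod N => Complex.exp (Complex.I * (n : ℂ) * (ψ j : ℂ)) with hadef
  set b : ZMod N → ℂ := fun j : ZMod N => f (2 * π * (j.val : ℝ) / N) with hbdef
  have htri : normAN N a ≤ normAN N b + ∑ j : ZMod N, ‖a j - b j‖ := tri N a b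
  have hsamp : normAN N b ≤ normAT f := sampling N f hfc hfp hfs
  have haval : ∀ j : ZMod N, a j = Complex.exp (Complex.I * (n : ℂ) * (ψ j : ℂ)) :=
    fun j => rfl
  have hbval : ∀ j : ZMod N,
      b j = Complex.exp (Complex.I * (l : ℂ) * ((φ (2 * π * (j.val:ℝ) / N) : ℝ) : ℂ)) :=
    fun j => rfl
  clear_value a b f
  -- pointwise error bound
  have hnar : |(n:ℝ)| ≤ (Q:ℝ) - 1 := by
    rw [_root_.abs_of_nonneg (show (0:ℝ) ≤ (n:ℝ) by exact_mod_cast hn0)]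
    have : (n:ℝ) ≤ ((Q - 1 : ℤ) : ℝ) := by exact_mod_cast hn1
    push_cast at this
    linarith
  have hq0 : (0:ℝ) < (Q:ℝ) := by exact_mod_cast lt_of_lt_of_le one_pos hQ₁
  have hq1 : (1:ℝ) ≤ (Q:ℝ) := by exact_mod_cast hQ₁
  have hjb : ∀ j : ZMod N, ‖a j - b j‖ ≤ 2 * π / N := by
    intro j
    have hln : ((l:ℕ):ℝ) = (n:ℝ) := by exact_mod_cast hl
    have ha : a j = Complex.exp (Complex.I * (((n:ℝ) * ψ j : ℝ) : ℂ)) := by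
      rw [haval j]
      congr 1
      push_cast
      ring
    have hb : b j = Complex.exp (Complex.I * (((n:ℝ) * φ (2 * π * (j.val:ℝ) / N) : ℝ) : ℂ)) := by
      rw [hbval j]
      congr 1
      rw [← hln]
      push_cast
      ring
    rw [ha, hb]
    refine le_trans (norm_exp_mul_I_sub_exp_mul_I_le _ _) ?_
    set x : ℝ := φ (2 * π * (j.val:ℝ) / N) with hx
    have hPj : |(1 / (2 * π)) * x * (Q : ℝ) - (P j : ℝ)| ≤ 1 / N := hP j
    have hkey : (n:ℝ) * ψ j - (n:ℝ) * x
        = (n:ℝ) * (-(2 * π / (Q:ℝ)) * ((1 / (2 * π)) * x * (Q:ℝ) - (P j : ℝ))) := by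
      rw [hψ j]
      field_simp
      ring
    rw [hkey, abs_mul, abs_mul, abs_neg, abs_of_pos (by positivity : (0:ℝ) < 2 * π / (Q:ℝ))]
    have step : |(n:ℝ)| * (2 * π / (Q:ℝ) * |(1 / (2 * π)) * x * (Q:ℝ) - (P j : ℝ)|)
        ≤ ((Q:ℝ) - 1) * (2 * π / (Q:ℝ) * (1 / N)) := by
      apply mul_le_mul hnar (mul_le_mul_of_nonneg_left hPj (by positivity))
        (by positivity) (by linarith)
    refine le_trans step ?_
    have hfin : ((Q:ℝ) - 1) * (2 * π / (Q:ℝ) * (1 / N))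
        = (2 * π / (N:ℝ)) * (((Q:ℝ) - 1) / (Q:ℝ)) := by
      field_simp
    have hfrac : ((Q:ℝ) - 1) / (Q:ℝ) ≤ 1 := by
      rw [div_le_one hq0]; linarith
    rw [hfin]
    calc (2 * π / (N:ℝ)) * (((Q:ℝ) - 1) / (Q:ℝ)) ≤ (2 * π / (N:ℝ)) * 1 :=
          mul_le_mul_of_nonneg_left hfrac (by positivity)
      _ = 2 * π / (N:ℝ) := mul_one _
  have herr : ∑ j : ZMod N, ‖a j - b j‖ ≤ 2 * π := by
    calc ∑ j : ZMod N, ‖a j - b j‖ ≤ ∑ _j : ZMod N, (2 * π / (N:ℝ)) :=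
          Finset.sum_le_sum (fun j _ => hjb j)
      _ = (N:ℝ) * (2 * π / (N:ℝ)) := by
          rw [Finset.sum_const, Finset.card_univ, ZMod.card, nsmul_eq_mul]
      _ = 2 * π := by field_simp
  have hπlt : π < 3.15 := Real.pi_lt_d2
  calc normAN N a ≤ normAT f + 2 * π := by linarith
    _ ≤ Θ + 2 * π := by linarith
    _ ≤ 8 * Θ := by nlinarith
end

section
/- Let f: ℝ → ℂ be continuous, 2π-periodic, with absolutely convergent Fourier series, and let N ≥ 1 be an integer. Define F: ℤ/Nℤ → ℂ by F(j) = f(2πj/N). Then for each k ∈ {0, 1, …, N−1} the Fourier coefficient of F on the cyclic group satisfies F̂(k) = Σ_{ν ∈ ℤ, ν ≡ k (mod N)} f̂(ν), and consequently ‖F‖_{A(𝕋_N)} ≤ ‖f‖_{A(𝕋)}. -/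
open scoped Real
open Complex MeasureTheory Filter

lemma expSum (N : ℕ) [NeZero N] (m : ℤ) :
    ∑ j : ZMod N, Complex.exp (2 * π * Complex.I * m * (j.val : ℂ) / N)
      = if (m : ZMod N) = 0 then (N : ℂ) else 0 := by
  have hN : (N : ℂ) ≠ 0 := Nat.cast_ne_zero.mpr (NeZero.ne N)
  set z : ℂ := Complex.exp (2 * π * Complex.I * m / N) with hz
  have hpow : ∀ j : ℕ, Complex.exp (2 * π * Complex.I * m * (j : ℂ) / N) = z ^ j := by
    intro j
    rw [hz, ← Complex.exp_nat_mul]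
    ring_nf
  have hzN : z ^ N = 1 := by
    rw [hz, ← Complex.exp_nat_mul]
    have : (N : ℂ) * (2 * π * Complex.I * m / N) = m * (2 * π * Complex.I) := by
      field_simp
    rw [this, Complex.exp_int_mul_two_pi_mul_I]
  have hsum : ∑ j : ZMod N, Complex.exp (2 * π * Complex.I * m * (j.val : ℂ) / N)
      = ∑ j ∈ Finset.range N, z ^ j := by
    rw [Finset.sum_congr rfl (fun j _ => hpow j.val)]
    exact Finset.sum_nbij' (fun j => j.val) (fun i => (i : ZMod N))
      (fun j _ => Finset.mem_range.mpr (ZMod.val_lt j))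
      (fun i hi => Finset.mem_univ _)
      (fun j _ => ZMod.natCast_zmod_val j)
      (fun i hi => ZMod.val_cast_of_lt (Finset.mem_range.mp hi))
      (fun j _ => rfl)
  rw [hsum]
  by_cases hm : (m : ZMod N) = 0
  · obtain ⟨k, hk⟩ := (ZMod.intCast_zmod_eq_zero_iff_dvd m N).mp hm
    have hz1 : z = 1 := by
      rw [hz, hk]
      have : 2 * π * Complex.I * ((N : ℤ) * k : ℤ) / N = k * (2 * π * Complex.I) := by
        push_cast; field_simp
      rw [this, Complex.exp_int_mul_two_pi_mul_I]
    simp [hz1, hm]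
  · have hz1 : z ≠ 1 := by
      intro h
      rw [hz, Complex.exp_eq_one_iff] at h
      obtain ⟨n, hn⟩ := h
      have : (m : ℂ) = n * N := by
        field_simp at hn
        have h2 : (2 * ↑π * Complex.I) * m = (2 * ↑π * Complex.I) * (n * N) := by
          linear_combination (2 * ↑π * Complex.I) * hn
        exact mul_left_cancel₀ (by simp [Real.pi_ne_zero, Complex.I_ne_zero]) h2
      have : m = n * N := by exact_mod_cast this
      apply hm
      rw [this]
      push_cast
      simp
    rw [geom_sum_eq hz1, hzN]
    simp [hm]

lemma hasSum_expansion (f : ℝ → ℂ) (hcont : Continuous f) (hper : Function.Periodic f (2 * π))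
    (hsum : Summable fun k : ℤ => ‖fourierCoeffT f k‖) (t : ℝ) :
    HasSum (fun n : ℤ => fourierCoeffT f n * Complex.exp (Complex.I * n * t)) (f t) := by
  haveI : Fact (0 < 2 * π) := ⟨Real.two_pi_pos⟩
  have hπ : (π : ℂ) ≠ 0 := Complex.ofReal_ne_zero.mpr Real.pi_ne_zero
  let g : C(AddCircle (2 * π), ℂ) :=
    ⟨hper.lift, by rw [(QuotientAddGroup.isQuotientMap_mk _).continuous_iff]; exact hcont⟩
  have hg : ∀ n : ℤ, fourierCoeff (⇑g) n = fourierCoeffT f n := by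
    intro n
    rw [fourierCoeff_eq_intervalIntegral (⇑g) n 0, zero_add]
    rw [fourierCoeffT]
    rw [Complex.real_smul]
    push_cast
    congr 1
    apply intervalIntegral.integral_congr
    intro x _
    have h1 : (fourier (-n) (x : AddCircle (2 * π)) : ℂ)
        = Complex.exp (2 * π * Complex.I * (-n : ℤ) * x / (2 * π)) := by
      rw [fourier_coe_apply]; norm_num
    have h2 : g (x : AddCircle (2 * π)) = f x := rfl
    simp only [smul_eq_mul]
    rw [h1, h2, mul_comm]
    congr 1
    push_cast
    rw [show (2 : ℂ) * π * Complex.I * (-n) * x / (2 * π) = -Complex.I * n * x by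
      field_simp]
  have hsum' : Summable (fourierCoeff (⇑g)) := by
    apply Summable.of_norm
    simpa only [hg] using hsum
  have := has_pointwise_sum_fourier_series_of_summable (f := g) hsum' (t : AddCircle (2 * π))
  have heq : (fun n : ℤ => fourierCoeff (⇑g) n • (fourier n (t : AddCircle (2 * π)) : ℂ))
      = fun n : ℤ => fourierCoeffT f n * Complex.exp (Complex.I * n * t) := by
    funext n
    rw [smul_eq_mul, hg, fourier_coe_apply]
    congr 1
    rw [show (2 : ℂ) * π * Complex.I * n * t / ((2:ℝ) * π : ℝ) = Complex.I * n * t by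
      push_cast; field_simp]
  rw [heq] at this
  have h2 : g (t : AddCircle (2 * π)) = f t := rfl
  rwa [h2] at this

theorem restriction_to_cyclic_group
    (f : ℝ → ℂ) (hcont : Continuous f) (hper : Function.Periodic f (2 * π))
    (hsum : Summable fun k : ℤ => ‖fourierCoeffT f k‖)
    (N : ℕ) [NeZero N]
    (F : ZMod N → ℂ) (hF : ∀ j : ZMod N, F j = f (2 * π * j.val / N)) :
    (∀ k : ZMod N, dftN N F k = ∑' ν : {ν : ℤ // (ν : ZMod N) = k}, fourierCoeffT f ν) ∧
      normAN N F ≤ normAT f := by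
  have hN : (N : ℂ) ≠ 0 := Nat.cast_ne_zero.mpr (NeZero.ne N)
  have hπ : (π : ℂ) ≠ 0 := Complex.ofReal_ne_zero.mpr Real.pi_ne_zero
  set c : ℤ → ℂ := fourierCoeffT f with hc
  -- pointwise expansion at sample points
  have hexp : ∀ j : ZMod N,
      HasSum (fun n : ℤ => c n * Complex.exp (Complex.I * n * (2 * π * j.val / N))) (F j) := by
    intro j
    have h := hasSum_expansion f hcont hper hsum (2 * π * j.val / N)
    rw [← hF j] at h
    convert h using 2
    push_cast
    ring
  have key : ∀ k : ZMod N,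
      dftN N F k = ∑' ν : {ν : ℤ // (ν : ZMod N) = k}, c ν := by
    intro k
    have hFj : ∀ j : ZMod N, F j
        = ∑' n : ℤ, c n * Complex.exp (Complex.I * n * (2 * π * j.val / N)) :=
      fun j => (hexp j).tsum_eq.symm
    set E : ZMod N → ℂ := fun j =>
      Complex.exp (-(2 * (π : ℂ) * Complex.I) * (j.val : ℂ) * (k.val : ℂ) / N) with hE
    have step1 : dftN N F k = (1 / (N : ℂ)) * ∑ j : ZMod N,
        ∑' n : ℤ, (c n * Complex.exp (Complex.I * n * (2 * π * j.val / N))) * E j := by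
      rw [dftN]
      congr 1
      apply Finset.sum_congr rfl
      intro j _
      rw [hFj j, tsum_mul_right]
    have hsummable : ∀ j : ZMod N,
        Summable (fun n : ℤ => (c n * Complex.exp (Complex.I * n * (2 * π * j.val / N))) * E j) :=
      fun j => (hexp j).summable.mul_right (E j)
    rw [step1, ← Summable.tsum_finsetSum (fun j _ => hsummable j)]
    rw [← tsum_mul_left]
    have term : ∀ n : ℤ, (1 / (N : ℂ)) * ∑ j : ZMod N,
        (c n * Complex.exp (Complex.I * n * (2 * π * j.val / N))) * E j
        = if ((n : ZMod N) = k) then c n else 0 := by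
      intro n
      have hcomb : ∀ j : ZMod N,
          (c n * Complex.exp (Complex.I * n * (2 * π * j.val / N))) * E j
          = c n * Complex.exp (2 * π * Complex.I * (((n - (k.val : ℤ) : ℤ)) : ℂ) * (j.val : ℂ) / N) := by
        intro j
        rw [hE, mul_assoc, ← Complex.exp_add]
        congr 2
        push_cast
        field_simp
        ring
      rw [Finset.sum_congr rfl (fun j _ => hcomb j), ← Finset.mul_sum, expSum N ((n : ℤ) - (k.val : ℤ))]
      have hcond : (((n : ℤ) - (k.val : ℤ) : ℤ) : ZMod N) = 0 ↔ (n : ZMod N) = k := by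
        push_cast
        rw [sub_eq_zero, ZMod.natCast_zmod_val]
      by_cases h : (n : ZMod N) = k
      · rw [if_pos (hcond.mpr h), if_pos h]
        field_simp
      · rw [if_neg (fun hh => h (hcond.mp hh)), if_neg h]
        ring
    rw [tsum_congr term]
    have hts : (∑' ν : {ν : ℤ // (ν : ZMod N) = k}, c ν.1)
        = ∑' n : ℤ, Set.indicator {ν : ℤ | (ν : ZMod N) = k} c n :=
      tsum_subtype {ν : ℤ | (ν : ZMod N) = k} c
    rw [hts]
    apply tsum_congr
    intro n
    rw [Set.indicator_apply]
    rfl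
  refine ⟨key, ?_⟩
  -- norm inequality
  have hsub : ∀ k : ZMod N, Summable fun ν : {ν : ℤ // (ν : ZMod N) = k} => ‖c ν.1‖ :=
    fun k => hsum.subtype _
  have hbound : ∀ k : ZMod N, ‖dftN N F k‖ ≤ ∑' ν : {ν : ℤ // (ν : ZMod N) = k}, ‖c ν.1‖ := by
    intro k
    rw [key k]
    exact norm_tsum_le_tsum_norm (hsub k)
  calc normAN N F = ∑ k : ZMod N, ‖dftN N F k‖ := rfl
    _ ≤ ∑ k : ZMod N, ∑' ν : {ν : ℤ // (ν : ZMod N) = k}, ‖c ν.1‖ :=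
        Finset.sum_le_sum (fun k _ => hbound k)
    _ = normAT f := by
        rw [normAT]
        let e := Equiv.sigmaFiberEquiv (fun ν : ℤ => (ν : ZMod N))
        have h1 : ∑' ν : ℤ, ‖fourierCoeffT f ν‖
            = ∑' p : (Σ k : ZMod N, {ν : ℤ // (ν : ZMod N) = k}), ‖c p.2.1‖ := by
          rw [← e.tsum_eq (fun ν => ‖c ν‖)]
          exact tsum_congr fun p => rfl
        have hsig : Summable (fun p : (Σ k : ZMod N, {ν : ℤ // (ν : ZMod N) = k}) => ‖c p.2.1‖) :=
          (e.summable_iff (f := fun ν => ‖c ν‖)).mpr hsum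
        rw [h1, hsig.tsum_sigma, tsum_fintype]
end

section
/- Let (X₁, μ₁) and (X₂, μ₂) be probability spaces and let μ = μ₁ ⊗ μ₂ be the product measure on X₁ × X₂. Let E ⊆ X₁ × X₂ be μ-measurable and let δ ≥ 0. Suppose that for every x₂ ∈ X₂ the section E^{x₂} = {x₁ ∈ X₁ : (x₁, x₂) ∈ E} satisfies min(μ₁(E^{x₂}), 1 − μ₁(E^{x₂})) ≤ δ, and for every x₁ ∈ X₁ the section E^{x₁} = {x₂ ∈ X₂ : (x₁, x₂) ∈ E} satisfies min(μ₂(E^{x₁}), 1 − μ₂(E^{x₁})) ≤ δ. Then min(μ(E), 1 − μ(E)) ≤ 3δ. -/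
open MeasureTheory
open scoped ENNReal

theorem sections_small_of_two
    {X₁ X₂ : Type*} [MeasurableSpace X₁] [MeasurableSpace X₂]
    (μ₁ : Measure X₁) (μ₂ : Measure X₂)
    [IsProbabilityMeasure μ₁] [IsProbabilityMeasure μ₂]
    (E : Set (X₁ × X₂)) (hE : MeasurableSet E) (δ : ℝ≥0∞)
    (h₁ : ∀ x₂ : X₂, min (μ₁ {x₁ : X₁ | (x₁, x₂) ∈ E}) (1 - μ₁ {x₁ : X₁ | (x₁, x₂) ∈ E}) ≤ δ)
    (h₂ : ∀ x₁ : X₁, min (μ₂ {x₂ : X₂ | (x₁, x₂) ∈ E}) (1 - μ₂ {x₂ : X₂ | (x₁, x₂) ∈ E}) ≤ δ) :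
    min ((μ₁.prod μ₂) E) (1 - (μ₁.prod μ₂) E) ≤ 3 * δ := by
  -- trivial case: 1 ≤ 3δ
  by_cases htriv : 1 ≤ 3 * δ
  · exact le_trans (min_le_right _ _) (le_trans tsub_le_self htriv)
  have hδ1 : δ < 1 := by
    by_contra h
    exact htriv (le_trans (by norm_num) (mul_le_mul_right (not_lt.mp h) 3))
  have hδtop : δ ≠ ∞ := hδ1.ne_top
  set f : X₂ → ℝ≥0∞ := fun x₂ => μ₁ {x₁ : X₁ | (x₁, x₂) ∈ E} with hf_def
  set g : X₁ → ℝ≥0∞ := fun x₁ => μ₂ {x₂ : X₂ | (x₁, x₂) ∈ E} with hg_def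
  have hf : Measurable f := measurable_measure_prodMk_right hE
  have hg : Measurable g := measurable_measure_prodMk_left hE
  set B : Set X₂ := {x₂ | δ < f x₂} with hB_def
  have hBm : MeasurableSet B := measurableSet_lt measurable_const hf
  set A : Set X₁ := {x₁ | g x₁ ≤ δ} with hA_def
  have hAm : MeasurableSet A := measurableSet_le hg measurable_const
  set a := μ₂ B with ha_def
  set u := μ₁ A with hu_def
  set m := (μ₁.prod μ₂) E with hm_def
  have hm2 : m = ∫⁻ x₂, f x₂ ∂μ₂ := Measure.prod_apply_symm hE
  have hm1 : m = ∫⁻ x₁, g x₁ ∂μ₁ := Measure.prod_apply hE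
  have hBf : ∀ x₂ ∈ B, 1 - f x₂ ≤ δ := by
    intro x₂ hx₂
    rcases min_le_iff.mp (h₁ x₂) with h | h
    · exact absurd h (not_le.mpr hx₂)
    · exact h
  have hBf' : ∀ x₂ ∈ B, 1 - δ ≤ f x₂ := by
    intro x₂ hx₂
    have h := hBf x₂ hx₂
    rw [tsub_le_iff_right] at h ⊢
    rwa [add_comm]
  have hAg : ∀ x₁ ∈ Aᶜ, 1 - δ ≤ g x₁ := by
    intro x₁ hx₁
    rcases min_le_iff.mp (h₂ x₁) with h | h
    · exact absurd h hx₁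
    · rw [tsub_le_iff_right] at h ⊢
      rwa [add_comm]
  -- F1 : (1-δ) * a ≤ m
  have F1 : (1 - δ) * a ≤ m := by
    calc (1 - δ) * a = ∫⁻ _ in B, (1 - δ) ∂μ₂ := (setLIntegral_const B (1 - δ)).symm
    _ ≤ ∫⁻ x₂ in B, f x₂ ∂μ₂ := setLIntegral_mono hf hBf'
    _ ≤ ∫⁻ x₂, f x₂ ∂μ₂ := setLIntegral_le_lintegral B f
    _ = m := hm2.symm
  -- F2 : m ≤ δ + a
  have F2 : m ≤ δ + a := by
    have hsplit : m = (∫⁻ x₂ in B, f x₂ ∂μ₂) + ∫⁻ x₂ in Bᶜ, f x₂ ∂μ₂ := by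
      rw [hm2, lintegral_add_compl f hBm]
    have e1 : (∫⁻ x₂ in Bᶜ, f x₂ ∂μ₂) ≤ δ := by
      calc (∫⁻ x₂ in Bᶜ, f x₂ ∂μ₂)
          ≤ ∫⁻ _ in Bᶜ, δ ∂μ₂ :=
            setLIntegral_mono measurable_const fun x₂ hx₂ => not_lt.mp hx₂
        _ = δ * μ₂ Bᶜ := setLIntegral_const _ _
        _ ≤ δ * 1 := mul_le_mul_right prob_le_one δ
        _ = δ := mul_one δ
    have e2 : (∫⁻ x₂ in B, f x₂ ∂μ₂) ≤ a := by
      calc (∫⁻ x₂ in B, f x₂ ∂μ₂)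
          ≤ ∫⁻ _ in B, 1 ∂μ₂ :=
            setLIntegral_mono measurable_const fun x₂ _ => prob_le_one
        _ = 1 * a := setLIntegral_const _ _
        _ = a := one_mul a
    rw [hsplit, add_comm]
    exact add_le_add e1 e2
  -- F4 : (1-δ)*(1-u) ≤ m
  have F4 : (1 - δ) * (1 - u) ≤ m := by
    have hAc : μ₁ Aᶜ = 1 - u := prob_compl_eq_one_sub hAm
    calc (1 - δ) * (1 - u) = ∫⁻ _ in Aᶜ, (1 - δ) ∂μ₁ := by
          rw [setLIntegral_const, hAc]
    _ ≤ ∫⁻ x₁ in Aᶜ, g x₁ ∂μ₁ := setLIntegral_mono hg hAg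
    _ ≤ ∫⁻ x₁, g x₁ ∂μ₁ := setLIntegral_le_lintegral _ _
    _ = m := hm1.symm
  -- F3 : (u - δ) * a ≤ δ * u  via E' = E ∩ (A ×ˢ univ)
  set E' : Set (X₁ × X₂) := E ∩ (A ×ˢ Set.univ) with hE'_def
  have hE'm : MeasurableSet E' := hE.inter (hAm.prod MeasurableSet.univ)
  set p := (μ₁.prod μ₂) E' with hp_def
  have hup : p ≤ δ * u := by
    calc p = ∫⁻ x₁, μ₂ (Prod.mk x₁ ⁻¹' E') ∂μ₁ := Measure.prod_apply hE'm
    _ ≤ ∫⁻ x₁, A.indicator (fun _ => δ) x₁ ∂μ₁ := by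
        refine lintegral_mono fun x₁ => ?_
        by_cases hx : x₁ ∈ A
        · rw [Set.indicator_of_mem hx]
          refine le_trans (measure_mono fun y hy => hy.1) (hx : g x₁ ≤ δ)
        · rw [Set.indicator_of_notMem hx]
          have : Prod.mk x₁ ⁻¹' E' = ∅ := by
            ext y
            simp only [hE'_def, Set.mem_preimage, Set.mem_inter_iff, Set.mem_prod,
              Set.mem_univ, and_true, Set.mem_empty_iff_false, iff_false]
            exact fun h => hx h.2
          simp [this]
    _ = δ * u := lintegral_indicator_const hAm δ
  have hlowp : (u - δ) * a ≤ p := by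
    have hlow : ∀ x₂ ∈ B, u - δ ≤ μ₁ ((fun x₁ => (x₁, x₂)) ⁻¹' E') := by
      intro x₂ hx₂
      rw [tsub_le_iff_right]
      have hsecm : MeasurableSet {x₁ : X₁ | (x₁, x₂) ∈ E} :=
        hE.preimage (measurable_prodMk_right)
      calc u = μ₁ A := rfl
      _ ≤ μ₁ (((fun x₁ => (x₁, x₂)) ⁻¹' E') ∪ {x₁ : X₁ | (x₁, x₂) ∈ E}ᶜ) := by
          refine measure_mono fun x₁ hx₁ => ?_
          by_cases hxE : (x₁, x₂) ∈ E
          · exact Or.inl ⟨hxE, hx₁, Set.mem_univ _⟩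
          · exact Or.inr hxE
      _ ≤ μ₁ ((fun x₁ => (x₁, x₂)) ⁻¹' E') + μ₁ {x₁ : X₁ | (x₁, x₂) ∈ E}ᶜ :=
          measure_union_le _ _
      _ ≤ μ₁ ((fun x₁ => (x₁, x₂)) ⁻¹' E') + δ := by
          gcongr
          rw [prob_compl_eq_one_sub hsecm]
          exact hBf x₂ hx₂
    calc (u - δ) * a = ∫⁻ _ in B, (u - δ) ∂μ₂ := (setLIntegral_const _ _).symm
    _ ≤ ∫⁻ x₂ in B, μ₁ ((fun x₁ => (x₁, x₂)) ⁻¹' E') ∂μ₂ :=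
        setLIntegral_mono (measurable_measure_prodMk_right hE'm) hlow
    _ ≤ ∫⁻ x₂, μ₁ ((fun x₁ => (x₁, x₂)) ⁻¹' E') ∂μ₂ := setLIntegral_le_lintegral _ _
    _ = p := (Measure.prod_apply_symm hE'm).symm
  have F3 : (u - δ) * a ≤ δ * u := hlowp.trans hup
  have hmtop : m ≠ ∞ := measure_ne_top _ E
  have hatop : a ≠ ∞ := measure_ne_top _ B
  have hutop : u ≠ ∞ := measure_ne_top _ A
  have h2δtop : (2 : ℝ≥0∞) * δ ≠ ∞ := ENNReal.mul_ne_top (by norm_num) hδtop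
  rcases le_or_gt a (2 * δ) with hca | hca
  · refine le_trans (min_le_left _ _) (F2.trans ?_)
    calc δ + a ≤ δ + 2 * δ := add_le_add_right hca δ
      _ = 3 * δ := by ring
  · -- reals
    have hd0 : (0:ℝ) ≤ δ.toReal := ENNReal.toReal_nonneg
    have hu0 : (0:ℝ) ≤ u.toReal := ENNReal.toReal_nonneg
    have hu2 : u ≤ 2 * δ := by
      by_contra hu2
      push_neg at hu2
      have hda : 2 * δ.toReal < a.toReal := by
        have := (ENNReal.toReal_lt_toReal h2δtop hatop).mpr hca
        rw [ENNReal.toReal_mul] at this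
        simpa using this
      have hdu : 2 * δ.toReal < u.toReal := by
        have := (ENNReal.toReal_lt_toReal h2δtop hutop).mpr hu2
        rw [ENNReal.toReal_mul] at this
        simpa using this
      have ht3 : a.toReal * (u.toReal - δ.toReal) ≤ δ.toReal * u.toReal := by
        have hh1 : u.toReal - δ.toReal ≤ (u - δ).toReal := ENNReal.le_toReal_sub hδtop
        have hh2 : ((u - δ) * a).toReal ≤ (δ * u).toReal :=
          ENNReal.toReal_mono (ENNReal.mul_ne_top hδtop hutop) F3
        rw [ENNReal.toReal_mul, ENNReal.toReal_mul] at hh2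
        have ha0 : (0:ℝ) ≤ a.toReal := ENNReal.toReal_nonneg
        nlinarith
      nlinarith
    -- conclude 1 - m ≤ 3δ
    refine le_trans (min_le_right _ _) ?_
    have h3δtop : (3 : ℝ≥0∞) * δ ≠ ∞ := ENNReal.mul_ne_top (by norm_num) hδtop
    have h1mtop : (1 : ℝ≥0∞) - m ≠ ∞ :=
      (tsub_le_self.trans_lt ENNReal.one_lt_top).ne
    rw [← ENNReal.toReal_le_toReal h1mtop h3δtop]
    have hm1le : m ≤ 1 := prob_le_one
    rw [ENNReal.toReal_sub_of_le hm1le ENNReal.one_ne_top, ENNReal.toReal_one,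
      ENNReal.toReal_mul]
    have ht4 : (1 - δ.toReal) * (1 - u.toReal) ≤ m.toReal := by
      have := ENNReal.toReal_mono hmtop F4
      rw [ENNReal.toReal_mul, ENNReal.toReal_sub_of_le hδ1.le ENNReal.one_ne_top,
        ENNReal.toReal_sub_of_le (prob_le_one) ENNReal.one_ne_top,
        ENNReal.toReal_one] at this
      exact this
    have hu2r : u.toReal ≤ 2 * δ.toReal := by
      have := ENNReal.toReal_mono h2δtop hu2
      rw [ENNReal.toReal_mul] at this
      simpa using this
    have h3r : ((3:ℝ≥0∞)).toReal = 3 := by simp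
    rw [h3r]
    nlinarith [mul_nonneg hd0 hu0]
end

section
/- Let m ≥ 1 and let (X_j, μ_j), j = 1, …, m, be probability spaces; let (X, μ) be their product, X = X₁ × ⋯ × X_m with μ = μ₁ ⊗ ⋯ ⊗ μ_m. Let E ⊆ X be μ-measurable and let δ ≥ 0. Suppose that for each j ∈ {1, …, m} and every choice of points x_i ∈ X_i (i ≠ j), the j-section E^{x₁,…,x_{j−1},x_{j+1},…,x_m} = {x_j ∈ X_j : (x₁, …, x_m) ∈ E} satisfies min(μ_j(section), 1 − μ_j(section)) ≤ δ. Then min(μ(E), 1 − μ(E)) ≤ 3^{m−1} δ. -/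
open MeasureTheory
open scoped ENNReal

universe u

section TwoFactor

variable {α β : Type*} [MeasurableSpace α] [MeasurableSpace β]

/-- If all vertical sections of `E` are `δ₁`-small-or-cosmall and all horizontal sections are
`δ₂`-small-or-cosmall, then `E` itself is `(δ₁ + 2δ₂)`-small-or-cosmall. -/
lemma two_factor_small (μ : Measure α) (ν : Measure β)
    [IsProbabilityMeasure μ] [IsProbabilityMeasure ν]
    (E : Set (α × β)) (hE : MeasurableSet E) (δ₁ δ₂ : ℝ≥0∞)
    (h1 : ∀ b : β, min (μ {a | (a, b) ∈ E}) (1 - μ {a | (a, b) ∈ E}) ≤ δ₁)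
    (h2 : ∀ a : α, min (ν {b | (a, b) ∈ E}) (1 - ν {b | (a, b) ∈ E}) ≤ δ₂) :
    min ((μ.prod ν) E) (1 - (μ.prod ν) E) ≤ δ₁ + 2 * δ₂ := by
  set f : α → ℝ≥0∞ := fun a => ν (Prod.mk a ⁻¹' E) with hf_def
  have hf : Measurable f := measurable_measure_prodMk_left hE
  set A : Set α := {a | δ₂ < f a} with hA_def
  have hA : MeasurableSet A := measurableSet_lt measurable_const hf
  have hEa : ∀ a : α, MeasurableSet (Prod.mk a ⁻¹' E) :=
    fun a => hE.preimage measurable_prodMk_left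
  have hfA : ∀ a ∈ A, 1 - f a ≤ δ₂ := by
    intro a ha
    have := h2 a
    have h' : min (f a) (1 - f a) ≤ δ₂ := this
    rcases min_le_iff.1 h' with h | h
    · exact absurd h (not_le.2 ha)
    · exact h
  have hfAc : ∀ a ∉ A, f a ≤ δ₂ := fun a ha => not_lt.1 ha
  set S : Set (α × β) := (A ×ˢ Set.univ) \ E with hS_def
  set T : Set (α × β) := E \ (A ×ˢ Set.univ) with hT_def
  have hS : MeasurableSet S := (hA.prod MeasurableSet.univ).diff hE
  have hT : MeasurableSet T := hE.diff (hA.prod MeasurableSet.univ)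
  -- Fubini in the first coordinate : `S` and `T` are small
  have hPS : (μ.prod ν) S ≤ δ₂ * μ A := by
    rw [Measure.prod_apply hS]
    calc ∫⁻ a, ν (Prod.mk a ⁻¹' S) ∂μ
        ≤ ∫⁻ a, A.indicator (fun _ => δ₂) a ∂μ := by
          refine lintegral_mono fun a => ?_
          by_cases ha : a ∈ A
          · have hsub : Prod.mk a ⁻¹' S ⊆ (Prod.mk a ⁻¹' E)ᶜ := by
              intro b hb; exact hb.2
            have : ν (Prod.mk a ⁻¹' S) ≤ ν ((Prod.mk a ⁻¹' E)ᶜ) := measure_mono hsub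
            rw [prob_compl_eq_one_sub (hEa a)] at this
            simpa [Set.indicator_of_mem ha] using this.trans (hfA a ha)
          · have hempty : Prod.mk a ⁻¹' S = ∅ := by
              ext b; simp [hS_def, ha]
            simp [hempty, Set.indicator_of_notMem ha]
      _ = δ₂ * μ A := lintegral_indicator_const hA δ₂
  have hPT : (μ.prod ν) T ≤ δ₂ * μ Aᶜ := by
    rw [Measure.prod_apply hT]
    calc ∫⁻ a, ν (Prod.mk a ⁻¹' T) ∂μ
        ≤ ∫⁻ a, Aᶜ.indicator (fun _ => δ₂) a ∂μ := by
          refine lintegral_mono fun a => ?_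
          by_cases ha : a ∈ A
          · have hempty : Prod.mk a ⁻¹' T = ∅ := by
              ext b; simp [hT_def, ha]
            simp [hempty]
          · have hsub : Prod.mk a ⁻¹' T ⊆ Prod.mk a ⁻¹' E := fun b hb => hb.1
            have : ν (Prod.mk a ⁻¹' T) ≤ f a := measure_mono hsub
            simpa [Set.indicator_of_mem (Set.mem_compl ha)] using this.trans (hfAc a ha)
      _ = δ₂ * μ Aᶜ := lintegral_indicator_const hA.compl δ₂
  have hPST : (μ.prod ν) S + (μ.prod ν) T ≤ δ₂ := by
    calc (μ.prod ν) S + (μ.prod ν) T ≤ δ₂ * μ A + δ₂ * μ Aᶜ := add_le_add hPS hPT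
      _ = δ₂ * (μ A + μ Aᶜ) := (mul_add _ _ _).symm
      _ = δ₂ := by rw [measure_add_measure_compl hA, measure_univ, mul_one]
  -- Fubini in the second coordinate : find a good section point `b₀`
  have hmeasS : Measurable fun b => μ ((fun a => (a, b)) ⁻¹' S) :=
    measurable_measure_prodMk_right hS
  have hmeasT : Measurable fun b => μ ((fun a => (a, b)) ⁻¹' T) :=
    measurable_measure_prodMk_right hT
  have hint : ∫⁻ b, (μ ((fun a => (a, b)) ⁻¹' S) + μ ((fun a => (a, b)) ⁻¹' T)) ∂ν ≤ δ₂ := by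
    rw [lintegral_add_left hmeasS]
    rw [← Measure.prod_apply_symm hS, ← Measure.prod_apply_symm hT]
    exact hPST
  obtain ⟨b₀, hb₀⟩ := exists_le_lintegral
    ((hmeasS.add hmeasT).aemeasurable
      (μ := ν))
  have hb0 : μ ((fun a => (a, b₀)) ⁻¹' S) + μ ((fun a => (a, b₀)) ⁻¹' T) ≤ δ₂ :=
    hb₀.trans hint
  set B : Set α := (fun a => (a, b₀)) ⁻¹' E with hB_def
  have hB : MeasurableSet B := hE.preimage measurable_prodMk_right
  have hSb : (fun a => (a, b₀)) ⁻¹' S = A \ B := by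
    ext a; simp [hS_def, hB_def]
  have hTb : (fun a => (a, b₀)) ⁻¹' T = B \ A := by
    ext a; simp [hT_def, hB_def]
  rw [hSb, hTb] at hb0
  have hAB : μ (A \ B) ≤ δ₂ := le_trans (le_add_right le_rfl) hb0
  have hBA : μ (B \ A) ≤ δ₂ := le_trans (le_add_left le_rfl) hb0
  have hPE_le : (μ.prod ν) E ≤ μ A + δ₂ := by
    have hsub : E ⊆ (A ×ˢ Set.univ) ∪ T := by
      intro x hx
      by_cases hx1 : x.1 ∈ A
      · exact Or.inl ⟨hx1, trivial⟩
      · exact Or.inr ⟨hx, fun h => hx1 h.1⟩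
    calc (μ.prod ν) E ≤ (μ.prod ν) (A ×ˢ Set.univ) + (μ.prod ν) T :=
          le_trans (measure_mono hsub) (measure_union_le _ _)
      _ ≤ μ A + δ₂ := by
          rw [Measure.prod_prod, measure_univ, mul_one]
          exact add_le_add le_rfl (hPT.trans (by
            calc δ₂ * μ Aᶜ ≤ δ₂ * 1 := mul_le_mul_right prob_le_one _
              _ = δ₂ := mul_one _))
  have hPEc_le : 1 - (μ.prod ν) E ≤ δ₂ + μ Aᶜ := by
    have hsub : Eᶜ ⊆ S ∪ (Aᶜ ×ˢ Set.univ) := by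
      intro x hx
      by_cases hx1 : x.1 ∈ A
      · exact Or.inl ⟨⟨hx1, trivial⟩, hx⟩
      · exact Or.inr ⟨hx1, trivial⟩
    calc 1 - (μ.prod ν) E = (μ.prod ν) Eᶜ := (prob_compl_eq_one_sub hE).symm
      _ ≤ (μ.prod ν) S + (μ.prod ν) (Aᶜ ×ˢ Set.univ) :=
          le_trans (measure_mono hsub) (measure_union_le _ _)
      _ ≤ δ₂ + μ Aᶜ := by
          rw [Measure.prod_prod, measure_univ, mul_one]
          refine add_le_add (hPS.trans ?_) le_rfl
          calc δ₂ * μ A ≤ δ₂ * 1 := mul_le_mul_right prob_le_one _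
            _ = δ₂ := mul_one _
  have h1b := h1 b₀
  have h1b' : min (μ B) (1 - μ B) ≤ δ₁ := h1b
  rcases min_le_iff.1 h1b' with hsmall | hbig
  · -- `B` is small, hence `A` is small, hence `E` is small
    have hμA : μ A ≤ δ₂ + δ₁ := by
      have : A ⊆ (A \ B) ∪ B := fun a ha => by
        by_cases hb : a ∈ B
        · exact Or.inr hb
        · exact Or.inl ⟨ha, hb⟩
      calc μ A ≤ μ (A \ B) + μ B := le_trans (measure_mono this) (measure_union_le _ _)
        _ ≤ δ₂ + δ₁ := add_le_add hAB hsmall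
    refine le_trans (min_le_left _ _) (hPE_le.trans ?_)
    calc μ A + δ₂ ≤ (δ₂ + δ₁) + δ₂ := add_le_add hμA le_rfl
      _ = δ₁ + 2 * δ₂ := by ring
  · -- `B` is co-small, hence `A` is co-small, hence `E` is co-small
    have hμAc : μ Aᶜ ≤ δ₂ + δ₁ := by
      have hsub : Aᶜ ⊆ (B \ A) ∪ Bᶜ := by
        intro a ha
        by_cases hb : a ∈ B
        · exact Or.inl ⟨hb, ha⟩
        · exact Or.inr hb
      calc μ Aᶜ ≤ μ (B \ A) + μ Bᶜ := le_trans (measure_mono hsub) (measure_union_le _ _)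
        _ ≤ δ₂ + δ₁ := by
            refine add_le_add hBA ?_
            rw [prob_compl_eq_one_sub hB]
            exact hbig
    refine le_trans (min_le_right _ _) (hPEc_le.trans ?_)
    calc δ₂ + μ Aᶜ ≤ δ₂ + (δ₂ + δ₁) := add_le_add le_rfl hμAc
      _ = δ₁ + 2 * δ₂ := by ring
end TwoFactor

lemma pi_sections_small : ∀ (n : ℕ) {X : Fin (n + 1) → Type u}
    [inst : ∀ j, MeasurableSpace (X j)]
    (μ : ∀ j, Measure (X j)) [∀ j, IsProbabilityMeasure (μ j)]
    (E : Set (∀ j, X j)) (hE : MeasurableSet E) (δ : ℝ≥0∞)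
    (_ : ∀ (j : Fin (n + 1)) (x : ∀ i, X i),
      min (μ j {y : X j | Function.update x j y ∈ E})
          (1 - μ j {y : X j | Function.update x j y ∈ E}) ≤ δ),
    min ((Measure.pi μ) E) (1 - (Measure.pi μ) E) ≤ 3 ^ n * δ := by
  intro n
  induction n with
  | zero =>
      intro X inst μ instP E hE δ hsec
      have hne0 : Nonempty (X 0) := by
        by_contra h
        have huniv : (Set.univ : Set (X 0)) = ∅ := by
          ext x; exact absurd ⟨x⟩ h
        have : (1 : ℝ≥0∞) = 0 := by
          rw [← measure_univ (μ := μ 0), huniv, measure_empty]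
        simp at this
      set e := MeasurableEquiv.piFinSuccAbove X 0 with he
      have mp := measurePreserving_piFinSuccAbove μ 0
      set ν : ∀ j : Fin 0, Measure (X (Fin.succAbove 0 j)) :=
        fun j => μ (Fin.succAbove 0 j) with hν
      haveI : ∀ j, IsProbabilityMeasure (ν j) := fun j => inferInstance
      set F : Set (X 0 × ∀ j : Fin 0, X (Fin.succAbove 0 j)) := ⇑e.symm ⁻¹' E with hF_def
      have hF : MeasurableSet F := hE.preimage e.symm.measurable
      have hPF : ((μ 0).prod (Measure.pi ν)) F = (Measure.pi μ) E := by
        rw [← mp.map_eq, MeasurableEquiv.map_apply]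
        congr 1
        ext z
        simp [hF_def]
        exact Iff.of_eq (congrArg (· ∈ E) (e.symm_apply_apply z))
      have hsymm : ∀ (a : X 0) (b : ∀ j : Fin 0, X (Fin.succAbove 0 j)),
          e.symm (a, b) = Fin.insertNth 0 a b := fun a b => rfl
      have key := two_factor_small (μ 0) (Measure.pi ν) F hF δ 0
        (by
          intro b
          obtain ⟨a₀⟩ := hne0
          have hset : {a : X 0 | (a, b) ∈ F} =
              {y : X 0 | Function.update (Fin.insertNth 0 a₀ b) 0 y ∈ E} := by
            ext y
            simp only [hF_def, Set.mem_preimage, Set.mem_setOf_eq, hsymm,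
              Fin.update_insertNth]
          rw [hset]
          exact hsec 0 (Fin.insertNth 0 a₀ b))
        (by
          intro a
          set G : Set (∀ j : Fin 0, X (Fin.succAbove 0 j)) := {b | (a, b) ∈ F} with hG
          have hGe : G = ∅ ∨ G = Set.univ := by
            by_cases hb : (fun j : Fin 0 => j.elim0 : ∀ j : Fin 0, X (Fin.succAbove 0 j)) ∈ G
            · right
              ext b
              have : b = (fun j : Fin 0 => j.elim0) := by
                funext j; exact j.elim0
              rw [this]
              exact iff_of_true hb trivial
            · left
              ext b
              have : b = (fun j : Fin 0 => j.elim0) := by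
                funext j; exact j.elim0
              rw [this]
              exact iff_of_false hb id
          rcases hGe with h | h
          · rw [h, measure_empty]
            simp
          · rw [h, measure_univ]
            simp)
      rw [hPF] at key
      refine key.trans ?_
      simp
  | succ n ih =>
      intro X inst μ instP E hE δ hsec
      have hne0 : Nonempty (X 0) := by
        by_contra h
        have huniv : (Set.univ : Set (X 0)) = ∅ := by
          ext x; exact absurd ⟨x⟩ h
        have : (1 : ℝ≥0∞) = 0 := by
          rw [← measure_univ (μ := μ 0), huniv, measure_empty]
        simp at this
      set e := MeasurableEquiv.piFinSuccAbove X 0 with he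
      have mp := measurePreserving_piFinSuccAbove μ 0
      set ν : ∀ j : Fin (n + 1), Measure (X (Fin.succAbove 0 j)) :=
        fun j => μ (Fin.succAbove 0 j) with hν
      haveI : ∀ j, IsProbabilityMeasure (ν j) := fun j => inferInstance
      set F : Set (X 0 × ∀ j : Fin (n + 1), X (Fin.succAbove 0 j)) := e.symm ⁻¹' E with hF_def
      have hF : MeasurableSet F := hE.preimage e.symm.measurable
      have hPF : ((μ 0).prod (Measure.pi ν)) F = (Measure.pi μ) E := by
        rw [← mp.map_eq, MeasurableEquiv.map_apply]
        congr 1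
        ext z
        simp [hF_def]
        exact Iff.of_eq (congrArg (· ∈ E) (e.symm_apply_apply z))
      have hsymm : ∀ (a : X 0) (b : ∀ j : Fin (n + 1), X (Fin.succAbove 0 j)),
          e.symm (a, b) = Fin.insertNth 0 a b := fun a b => rfl
      have key := two_factor_small (μ 0) (Measure.pi ν) F hF δ (3 ^ n * δ)
        (by
          intro b
          obtain ⟨a₀⟩ := hne0
          have hset : {a : X 0 | (a, b) ∈ F} =
              {y : X 0 | Function.update (Fin.insertNth 0 a₀ b) 0 y ∈ E} := by
            ext y
            simp only [hF_def, Set.mem_preimage, Set.mem_setOf_eq, hsymm,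
              Fin.update_insertNth]
          rw [hset]
          exact hsec 0 (Fin.insertNth 0 a₀ b))
        (by
          intro a
          have hFa : MeasurableSet {b | (a, b) ∈ F} := hF.preimage measurable_prodMk_left
          refine ih ν {b | (a, b) ∈ F} hFa δ ?_
          intro j b
          have hset : {y | Function.update b j y ∈ {b | (a, b) ∈ F}} =
              {y | Function.update (Fin.insertNth 0 a b) (Fin.succAbove 0 j) y ∈ E} := by
            ext y
            simp only [Set.mem_setOf_eq, hF_def, Set.mem_preimage, hsymm,
              Fin.insertNth_update]
          rw [hset]
          exact hsec (Fin.succAbove 0 j) (Fin.insertNth 0 a b))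
      rw [hPF] at key
      refine key.trans ?_
      have h3 : δ + 2 * (3 ^ n * δ) = (1 + 2 * 3 ^ n) * δ := by ring
      rw [h3]
      refine mul_le_mul_left ?_ δ
      have h1 : (1 : ℝ≥0∞) ≤ 3 ^ n := one_le_pow_of_one_le' (by norm_num) n
      calc (1 : ℝ≥0∞) + 2 * 3 ^ n ≤ 3 ^ n + 2 * 3 ^ n := add_le_add h1 le_rfl
        _ = 3 ^ (n + 1) := by ring

theorem sections_small_of_pi
    {m : ℕ} (hm : 1 ≤ m)
    {X : Fin m → Type*} [∀ j, MeasurableSpace (X j)]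
    (μ : ∀ j, Measure (X j)) [∀ j, IsProbabilityMeasure (μ j)]
    (E : Set (∀ j, X j)) (hE : MeasurableSet E) (δ : ℝ≥0∞)
    (hsec : ∀ (j : Fin m) (x : ∀ i, X i),
      min (μ j {y : X j | Function.update x j y ∈ E})
          (1 - μ j {y : X j | Function.update x j y ∈ E}) ≤ δ) :
    min ((Measure.pi μ) E) (1 - (Measure.pi μ) E) ≤ 3 ^ (m - 1) * δ := by
  obtain ⟨n, rfl⟩ : ∃ n, m = n + 1 := ⟨m - 1, (Nat.succ_pred_eq_of_pos hm).symm⟩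
  simpa using pi_sections_small n μ E hE δ hsec
end

section
/- Let φ: ℝ → ℝ be continuous and 2π-periodic. Suppose there exists an integer n such that both 2π-periodic functions e^{inφ} and e^{i(n+1)φ} have absolutely convergent Fourier series. Then for every m ∈ ℤ the function e^{imφ} has absolutely convergent Fourier series. -/
open scoped Real
open Complex MeasureTheory Filter
open scoped ENNReal NNReal

namespace WienerAux

open AddCircle

instance fact_two_pi_pos : Fact ((0:ℝ) < 2 * π) := ⟨by positivity⟩

/-- Bridge: `fourierCoeffT` equals mathlib's `fourierCoeff` of any lift. -/
lemma coeffT_eq (L : AddCircle (2 * π) → ℂ) (f : ℝ → ℂ)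
    (h : ∀ t : ℝ, L t = f t) (k : ℤ) :
    fourierCoeffT f k = fourierCoeff L k := by
  rw [fourierCoeff_eq_intervalIntegral L k 0]
  rw [fourierCoeffT]
  rw [zero_add]
  have h1 : ∀ x : ℝ, (fourier (-k) (x : AddCircle (2*π)) : ℂ) • L (x : AddCircle (2*π))
      = f x * Complex.exp (-Complex.I * (k : ℂ) * (x : ℂ)) := by
    intro x
    rw [smul_eq_mul, h x, mul_comm]
    congr 1
    rw [fourier_coe_apply]
    congr 1
    push_cast
    have : (π : ℂ) ≠ 0 := by exact_mod_cast Real.pi_ne_zero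
    field_simp
  rw [intervalIntegral.integral_congr (fun x _ => h1 x)]
  rw [real_smul]
  congr 1
  push_cast
  ring

lemma norm_fourier_apply (j : ℤ) (x : AddCircle (2 * π)) : ‖(fourier j x : ℂ)‖ = 1 := by
  simp [fourier_apply, Circle.norm_coe]

/-- Fourier coefficient of a product, when one factor has summable coefficients. -/
lemma fourierCoeff_mul (F G : C(AddCircle (2 * π), ℂ))
    (hF : Summable fun k : ℤ => ‖fourierCoeff (⇑F) k‖) (m : ℤ) :
    fourierCoeff (fun x => F x * G x) m
      = ∑' k : ℤ, fourierCoeff (⇑F) k * fourierCoeff (⇑G) (m - k) := by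
  set c : ℤ → ℂ := fun k => fourierCoeff (⇑F) k with hc
  have hFsum : Summable (fourierCoeff (⇑F)) := by
    exact Summable.of_norm hF
  -- pointwise expansion
  have hpt : ∀ x : AddCircle (2 * π),
      HasSum (fun k : ℤ => c k * (fourier (-(m - k)) x * G x))
        (fourier (-m) x • (F x * G x)) := by
    intro x
    have h0 := has_pointwise_sum_fourier_series_of_summable hFsum x
    have h1 := (h0.mul_right (G x)).mul_left (fourier (-m) x : ℂ)
    have h2 : (fun k : ℤ => (fourier (-m) x : ℂ) * (c k • fourier k x * G x))
        = fun k : ℤ => c k * (fourier (-(m - k)) x * G x) := by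
      funext k
      have : (fourier (-(m - k)) x : ℂ) = fourier (-m) x * fourier k x := by
        rw [← fourier_add]
        congr 1
        ring_nf
      rw [this]
      simp only [smul_eq_mul]
      ring
    rw [h2] at h1
    simpa [smul_eq_mul, mul_assoc] using h1
  have hmeas : ∀ k : ℤ, AEStronglyMeasurable
      (fun x : AddCircle (2 * π) => c k * (fourier (-(m - k)) x * G x))
      (haarAddCircle) := by
    intro k
    exact (continuous_const.mul ((fourier (-(m-k))).continuous.mul G.continuous)).aestronglyMeasurable
  have hbound : ∑' k : ℤ, ∫⁻ x : AddCircle (2 * π),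
      ‖c k * (fourier (-(m - k)) x * G x)‖₊ ∂haarAddCircle ≠ ⊤ := by
    have hle : ∀ k : ℤ, (∫⁻ x : AddCircle (2 * π),
        ‖c k * (fourier (-(m - k)) x * G x)‖₊ ∂haarAddCircle)
        ≤ (‖c k‖₊ * ‖G‖₊ : ℝ≥0∞) := by
      intro k
      have hub : ∀ x : AddCircle (2 * π),
          (‖c k * (fourier (-(m - k)) x * G x)‖₊ : ℝ≥0∞) ≤ (‖c k‖₊ * ‖G‖₊ : ℝ≥0∞) := by
        intro x
        have : ‖c k * (fourier (-(m - k)) x * G x)‖ ≤ ‖c k‖ * ‖G‖ := by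
          rw [norm_mul, norm_mul, norm_fourier_apply, one_mul]
          exact mul_le_mul_of_nonneg_left (G.norm_coe_le_norm x) (norm_nonneg _)
        exact_mod_cast ENNReal.coe_le_coe.mpr (by exact_mod_cast this)
      calc ∫⁻ x, (‖c k * (fourier (-(m - k)) x * G x)‖₊ : ℝ≥0∞) ∂haarAddCircle
          ≤ ∫⁻ _, (‖c k‖₊ * ‖G‖₊ : ℝ≥0∞) ∂haarAddCircle := lintegral_mono hub
        _ = (‖c k‖₊ * ‖G‖₊ : ℝ≥0∞) := by
            rw [lintegral_const, measure_univ, mul_one]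
    refine ne_top_of_le_ne_top ?_ (ENNReal.tsum_le_tsum hle)
    rw [ENNReal.tsum_mul_right]
    refine ENNReal.mul_ne_top ?_ (by simp)
    rw [ENNReal.tsum_coe_ne_top_iff_summable]
    have : Summable fun k : ℤ => ‖c k‖₊ := by
      rw [← NNReal.summable_coe]
      simpa [coe_nnnorm] using hF
    exact this
  have key : fourierCoeff (fun x => F x * G x) m
      = ∑' k : ℤ, ∫ x : AddCircle (2 * π),
          c k * (fourier (-(m - k)) x * G x) ∂haarAddCircle := by
    rw [fourierCoeff]
    rw [← integral_tsum hmeas hbound]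
    refine integral_congr_ae (Filter.Eventually.of_forall fun x => ?_)
    exact ((hpt x).tsum_eq).symm
  rw [key]
  congr 1
  funext k
  rw [MeasureTheory.integral_const_mul]
  rfl

/-- Summability is preserved by products. -/
lemma summable_mul (F G : C(AddCircle (2 * π), ℂ))
    (hF : Summable fun k : ℤ => ‖fourierCoeff (⇑F) k‖)
    (hG : Summable fun k : ℤ => ‖fourierCoeff (⇑G) k‖) :
    Summable fun m : ℤ => ‖fourierCoeff (fun x => F x * G x) m‖ := by
  let c : ℤ → ℂ := fun k => fourierCoeff (⇑F) k
  let d : ℤ → ℂ := fun k => fourierCoeff (⇑G) k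
  have hF' : Summable fun k : ℤ => ‖c k‖ := hF
  have hG' : Summable fun k : ℤ => ‖d k‖ := hG
  have hprod : Summable fun p : ℤ × ℤ => ‖c p.1‖ * ‖d p.2‖ :=
    hF'.mul_of_nonneg hG' (fun _ => norm_nonneg _) (fun _ => norm_nonneg _)
  let e : ℤ × ℤ ≃ ℤ × ℤ :=
    ⟨fun p => (p.2, p.1 - p.2), fun q => (q.1 + q.2, q.1),
      fun p => by simp, fun q => by simp⟩
  have h2 : Summable fun p : ℤ × ℤ => ‖c p.2‖ * ‖d (p.1 - p.2)‖ := by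
    have := (Equiv.summable_iff e).mpr hprod
    simpa [e, Function.comp_def] using this
  have h3 := (summable_prod_of_nonneg
    (fun p : ℤ × ℤ => mul_nonneg (norm_nonneg _) (norm_nonneg _))).mp h2
  refine Summable.of_nonneg_of_le (fun m => norm_nonneg _) (fun m => ?_) h3.2
  rw [fourierCoeff_mul F G hF m]
  have hfib : Summable fun k : ℤ => ‖c k * d (m - k)‖ := by
    simp only [norm_mul]
    exact h3.1 m
  calc ‖∑' k : ℤ, c k * d (m - k)‖ ≤ ∑' k : ℤ, ‖c k * d (m - k)‖ :=
        norm_tsum_le_tsum_norm hfib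
    _ = ∑' k : ℤ, ‖c k‖ * ‖d (m - k)‖ := by simp [norm_mul]

/-- Fourier coefficient of a conjugate. -/
lemma fourierCoeff_conj (f : AddCircle (2 * π) → ℂ) (k : ℤ) :
    fourierCoeff (fun x => (starRingEnd ℂ) (f x)) k
      = (starRingEnd ℂ) (fourierCoeff f (-k)) := by
  rw [fourierCoeff, fourierCoeff, ← integral_conj]
  congr 1
  funext x
  rw [smul_eq_mul, smul_eq_mul, map_mul, neg_neg, ← fourier_neg]

lemma summable_conj (f : AddCircle (2 * π) → ℂ)
    (hf : Summable fun k : ℤ => ‖fourierCoeff f k‖) :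
    Summable fun k : ℤ => ‖fourierCoeff (fun x => (starRingEnd ℂ) (f x)) k‖ := by
  have h1 : Summable fun k : ℤ => ‖fourierCoeff f (-k)‖ :=
    (Equiv.neg ℤ).summable_iff.mpr hf
  simpa [fourierCoeff_conj] using h1

end WienerAux

theorem all_powers_in_A_of_two_consecutive
    (φ : ℝ → ℝ) (hcont : Continuous φ) (hper : Function.Periodic φ (2 * π))
    (n : ℤ)
    (hn : Summable fun k : ℤ =>
      ‖fourierCoeffT (fun t : ℝ => Complex.exp (Complex.I * (n : ℂ) * (φ t : ℂ))) k‖)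
    (hn1 : Summable fun k : ℤ =>
      ‖fourierCoeffT (fun t : ℝ => Complex.exp (Complex.I * ((n : ℂ) + 1) * (φ t : ℂ))) k‖) :
    ∀ m : ℤ, Summable fun k : ℤ =>
      ‖fourierCoeffT (fun t : ℝ => Complex.exp (Complex.I * (m : ℂ) * (φ t : ℂ))) k‖ := by
  classical
  open WienerAux AddCircle in
  -- lift φ to the circle
  have hΦcont : Continuous (hper.lift) :=
    hcont.quotient_liftOn' (by
      intro a b h'
      rw [QuotientAddGroup.leftRel_apply] at h'
      obtain ⟨k, hk⟩ := h'
      exact (hper.zsmul k _).symm.trans (congr_arg φ (add_eq_of_eq_neg_add hk)))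
  -- the family of exponentials as continuous maps
  set E : ℤ → C(AddCircle (2 * π), ℂ) := fun a =>
    ⟨fun x => Complex.exp (Complex.I * (a : ℂ) * (hper.lift x : ℂ)),
      (Complex.continuous_exp.comp (by fun_prop))⟩ with hE
  have hEcoe : ∀ (a : ℤ) (t : ℝ),
      E a (t : AddCircle (2 * π)) = Complex.exp (Complex.I * (a : ℂ) * (φ t : ℂ)) := by
    intro a t
    simp [hE, hper.lift_coe]
  -- transfer the statement to the circle
  have hbridge : ∀ a : ℤ,
      (Summable fun k : ℤ =>
        ‖fourierCoeffT (fun t : ℝ => Complex.exp (Complex.I * (a : ℂ) * (φ t : ℂ))) k‖)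
      ↔ Summable fun k : ℤ => ‖fourierCoeff (⇑(E a)) k‖ := by
    intro a
    have : ∀ k : ℤ, fourierCoeffT (fun t : ℝ => Complex.exp (Complex.I * (a : ℂ) * (φ t : ℂ))) k
        = fourierCoeff (⇑(E a)) k := fun k => coeffT_eq _ _ (hEcoe a) k
    simp_rw [this]
  set W : ℤ → Prop := fun a => Summable fun k : ℤ => ‖fourierCoeff (⇑(E a)) k‖ with hW
  -- pointwise algebra of the exponentials
  have hmulpt : ∀ (a b : ℤ) (x : AddCircle (2 * π)), E (a + b) x = E a x * E b x := by
    intro a b x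
    simp only [hE, ContinuousMap.coe_mk]
    rw [← Complex.exp_add]
    congr 1
    push_cast
    ring
  have hconjpt : ∀ (a : ℤ) (x : AddCircle (2 * π)),
      E (-a) x = (starRingEnd ℂ) (E a x) := by
    intro a x
    simp only [hE, ContinuousMap.coe_mk]
    rw [← Complex.exp_conj, map_mul, map_mul, Complex.conj_I, Complex.conj_ofReal,
      map_intCast]
    push_cast
    ring_nf
  -- closure properties
  have hWmul : ∀ a b : ℤ, W a → W b → W (a + b) := by
    intro a b ha hb
    have := summable_mul (E a) (E b) ha hb
    have heq : (fun x => E a x * E b x) = ⇑(E (a + b)) := by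
      funext x; rw [hmulpt a b x]
    rwa [heq] at this
  have hWconj : ∀ a : ℤ, W a → W (-a) := by
    intro a ha
    have := summable_conj (⇑(E a)) ha
    have heq : (fun x => (starRingEnd ℂ) (E a x)) = ⇑(E (-a)) := by
      funext x; rw [hconjpt a x]
    rwa [heq] at this
  -- base facts
  have hWn : W n := (hbridge n).mp hn
  have hWn1 : W (n + 1) := by
    refine (hbridge (n + 1)).mp ?_
    have : ∀ t : ℝ, Complex.exp (Complex.I * ((n : ℂ) + 1) * (φ t : ℂ))
        = Complex.exp (Complex.I * (((n + 1 : ℤ)) : ℂ) * (φ t : ℂ)) := by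
      intro t; push_cast; ring_nf
    simp_rw [← this]
    exact hn1
  have hW1 : W 1 := by
    have := hWmul (n + 1) (-n) hWn1 (hWconj n hWn)
    simpa using this
  have hWneg1 : W (-1) := hWconj 1 hW1
  have hW0 : W 0 := by
    have := hWmul n (-n) hWn (hWconj n hWn)
    simpa using this
  have hWall : ∀ m : ℤ, W m := by
    intro m
    induction m using Int.induction_on with
    | zero => exact hW0
    | succ i ih => exact hWmul i 1 ih hW1
    | pred i ih => simpa [sub_eq_add_neg] using hWmul (-i) (-1) ih hWneg1
  intro m
  exact (hbridge m).mpr (hWall m)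
end
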